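/- Let 𝒜 be a finite category that is equivalent (as a category) to a finite category ℬ whose matrix Z_ℬ is invertible over ℚ. Let f_𝒜(t) = ∑_{n∈ℕ} s((Z_𝒜 − I)ⁿ) tⁿ ∈ ℚ⟦t⟧. Then 𝒜 has series Euler characteristic: there exist polynomials p, q ∈ ℚ[t] with q(−1) ≠ 0 and q · f_𝒜 = p in ℚ⟦t⟧, and moreover p(−1)/q(−1) = s(Z_ℬ⁻¹). That is, χ_Σ(𝒜) is defined and equals χ(𝒜) = s(Z_ℬ⁻¹). -/

import Mathlib

open CategoryTheory Matrix Polynomial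

/-- The sum of all entries of a square matrix. -/
def matS {ι R : Type*} [Fintype ι] [CommRing R] (M : Matrix ι ι R) : R :=
  ∑ i, ∑ j, M i j

lemma genfun {ι : Type*} [Fintype ι] [DecidableEq ι] (N : Matrix ι ι ℚ) (w : ι → ℚ) :
    (((1 - (X : ℚ[X]) • N.map C).det : ℚ[X]) : PowerSeries ℚ) *
      PowerSeries.mk (fun j => ∑ k, ∑ l, w k * (N ^ j) k l) =
    ((∑ k, ∑ l, C (w k) * (1 - (X : ℚ[X]) • N.map C).adjugate k l : ℚ[X]) : PowerSeries ℚ) := by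
  set σ : ℚ[X] →+* PowerSeries ℚ := Polynomial.coeToPowerSeries.ringHom with hσ
  have hσC : ∀ a : ℚ, σ (C a) = PowerSeries.C a := by intro a; simp [hσ]
  set A : Matrix ι ι ℚ[X] := 1 - (X : ℚ[X]) • N.map C with hA
  set Aps : Matrix ι ι (PowerSeries ℚ) :=
    1 - (PowerSeries.X : PowerSeries ℚ) • N.map (PowerSeries.C) with hAps
  have hmap : σ.mapMatrix A = Aps := by
    ext k l d
    rw [RingHom.mapMatrix_apply, Matrix.map_apply, hA, hAps]
    rw [Matrix.sub_apply, Matrix.sub_apply, Matrix.smul_apply, Matrix.smul_apply,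
      Matrix.map_apply, Matrix.map_apply, smul_eq_mul, smul_eq_mul, map_sub, _root_.map_mul]
    rw [show σ X = PowerSeries.X by simp [hσ], hσC]
    congr 2
    by_cases h : k = l <;> simp [Matrix.one_apply, h, hσ]
  set G : Matrix ι ι (PowerSeries ℚ) :=
    Matrix.of (fun k l => PowerSeries.mk fun j => (N ^ j) k l) with hG
  have key : Aps * G = 1 := by
    have hent : ∀ k l, (Aps * G) k l = (1 : Matrix ι ι (PowerSeries ℚ)) k l := by
      intro k l
      rw [hAps, Matrix.sub_mul, Matrix.one_mul, Matrix.smul_mul]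
      rw [Matrix.sub_apply, Matrix.smul_apply, smul_eq_mul]
      refine PowerSeries.ext fun d => ?_
      rcases d with _ | d
      · simp [hG, Matrix.mul_apply, Matrix.one_apply, PowerSeries.coeff_zero_X_mul,
          pow_zero, apply_ite]
      · rw [map_sub, PowerSeries.coeff_succ_X_mul]
        have h1 : (PowerSeries.coeff (d+1)) (G k l) = (N ^ (d+1)) k l := by
          simp [hG]
        have h2 : (PowerSeries.coeff d) ((N.map (PowerSeries.C) * G) k l)
            = (N ^ (d+1)) k l := by
          rw [Matrix.mul_apply, map_sum]
          have : ∀ k', (PowerSeries.coeff d) (N.map (PowerSeries.C) k k' * G k' l)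
              = N k k' * (N ^ d) k' l := by
            intro k'
            simp [hG, Matrix.map_apply, PowerSeries.coeff_C_mul]
          rw [Finset.sum_congr rfl (fun k' _ => this k')]
          rw [pow_succ' N d, Matrix.mul_apply]
        rw [h1, h2, sub_self]
        simp [Matrix.one_apply, apply_ite]
    ext k l; rw [hent k l]
  have hadj : Aps.adjugate = Aps.det • G := by
    calc Aps.adjugate = Aps.adjugate * (Aps * G) := by rw [key, mul_one]
    _ = (Aps.adjugate * Aps) * G := by rw [mul_assoc]
    _ = (Aps.det • (1 : Matrix ι ι (PowerSeries ℚ))) * G := by rw [Matrix.adjugate_mul]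
    _ = Aps.det • G := by rw [Matrix.smul_mul, Matrix.one_mul]
  have hq : (A.det : PowerSeries ℚ) = Aps.det := by
    rw [← hmap, ← RingHom.map_det]; simp [hσ]
  have hp : ∀ k l, σ (A.adjugate k l) = Aps.det * G k l := by
    intro k l
    have h3 : σ (A.adjugate k l) = (σ.mapMatrix A.adjugate) k l := by simp
    rw [h3, RingHom.map_adjugate, hmap, hadj]
    simp [Matrix.smul_apply, smul_eq_mul]
  have hGsum : (∑ k, ∑ l, PowerSeries.C (w k) * G k l)
      = PowerSeries.mk (fun j => ∑ k, ∑ l, w k * (N ^ j) k l) := by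
    refine PowerSeries.ext fun d => ?_
    rw [map_sum]
    simp [PowerSeries.coeff_C_mul, hG]
  have main : ((∑ k, ∑ l, C (w k) * A.adjugate k l : ℚ[X]) : PowerSeries ℚ)
      = Aps.det * PowerSeries.mk (fun j => ∑ k, ∑ l, w k * (N ^ j) k l) := by
    rw [← Polynomial.coeToPowerSeries.ringHom_apply, ← hσ, map_sum]
    have hterm : ∀ k, σ (∑ l, C (w k) * A.adjugate k l)
        = Aps.det * ∑ l, PowerSeries.C (w k) * G k l := by
      intro k
      rw [map_sum, Finset.mul_sum]
      refine Finset.sum_congr rfl fun l _ => ?_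
      rw [_root_.map_mul, hp k l, hσC]
      ring
    rw [Finset.sum_congr rfl (fun k _ => hterm k), ← Finset.mul_sum, hGsum]
  rw [main, hq]


theorem stmt12 (m n : ℕ) [Category (Fin m)] [Category (Fin n)]
    [∀ i j : Fin m, Fintype (i ⟶ j)] [∀ i j : Fin n, Fintype (i ⟶ j)]
    (e : Fin m ≌ Fin n)
    (hinv : IsUnit (Matrix.of fun i j : Fin n => (Fintype.card (i ⟶ j) : ℚ)).det) :
    let ZA : Matrix (Fin m) (Fin m) ℚ := Matrix.of fun i j => (Fintype.card (i ⟶ j) : ℚ)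
    let ZB : Matrix (Fin n) (Fin n) ℚ := Matrix.of fun i j => (Fintype.card (i ⟶ j) : ℚ)
    ∃ p q : ℚ[X], q.eval (-1) ≠ 0 ∧
      (q : PowerSeries ℚ) * PowerSeries.mk (fun k => matS ((ZA - 1) ^ k)) =
        (p : PowerSeries ℚ) ∧
      p.eval (-1) / q.eval (-1) = matS ZB⁻¹ := by
  intro ZA ZB
  classical
  set φ : Fin m → Fin n := fun i => e.functor.obj i with hφ
  have hZA : ∀ i j : Fin m, ZA i j = ZB (φ i) (φ j) := by
    intro i j
    show ((Fintype.card (i ⟶ j) : ℚ)) = ((Fintype.card (φ i ⟶ φ j) : ℚ))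
    exact_mod_cast Fintype.card_congr (e.fullyFaithfulFunctor.homEquiv)
  have hZBrow : ∀ b b' : Fin n, (b ≅ b') → ∀ cc : Fin n, ZB b cc = ZB b' cc := by
    intro b b' u cc
    show ((Fintype.card (b ⟶ cc) : ℚ)) = ((Fintype.card (b' ⟶ cc) : ℚ))
    exact_mod_cast Fintype.card_congr u.homFromEquiv
  have hdetZB : ZB.det ≠ 0 := by
    rw [isUnit_iff_ne_zero] at hinv; exact hinv
  have hsurj : Function.Surjective φ := by
    intro b
    refine ⟨e.inverse.obj b, ?_⟩
    by_contra h
    have hiso : φ (e.inverse.obj b) ≅ b := e.counitIso.app b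
    have hrow : ZB (φ (e.inverse.obj b)) = ZB b := funext fun cc => hZBrow _ _ hiso cc
    exact hdetZB (Matrix.det_zero_of_row_eq h hrow)
  set c : Fin n → ℚ := fun k => ((Finset.univ.filter fun i => φ i = k).card : ℚ) with hc
  have hcne : ∀ k, c k ≠ 0 := by
    intro k
    obtain ⟨i, hi⟩ := hsurj k
    have hmem : i ∈ Finset.univ.filter fun i => φ i = k := by simp [hi]
    have hpos := Finset.card_pos.mpr ⟨i, hmem⟩
    simp only [hc]
    exact_mod_cast hpos.ne'
  set D : Matrix (Fin n) (Fin n) ℚ := Matrix.diagonal c with hD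
  set N' : Matrix (Fin n) (Fin n) ℚ := ZB * D - 1 with hN
  set P : Matrix (Fin m) (Fin n) ℚ := Matrix.of (fun i k => if φ i = k then 1 else 0) with hP
  set M0 : Matrix (Fin m) (Fin m) ℚ := ZA - 1 with hM0
  have hProw : ∀ i, ∑ k, P i k = 1 := by
    intro i; simp [hP, Finset.sum_ite_eq]
  have hPmul : ∀ (Q : Matrix (Fin n) (Fin n) ℚ) (i : Fin m) (l : Fin n),
      (P * Q) i l = Q (φ i) l := by
    intro Q i l
    rw [Matrix.mul_apply]
    simp [hP, ite_mul, Finset.sum_ite_eq]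
  have hsum_ite : ∀ k, (∑ i : Fin m, if φ i = k then (1:ℚ) else 0) = c k := by
    intro k; simp [hc, Finset.sum_boole]
  have h1 : M0 * P = P * N' := by
    ext i k
    have hL : (M0 * P) i k = (∑ j, ZA i j * P j k) - P i k := by
      rw [hM0, Matrix.sub_mul, Matrix.one_mul, Matrix.sub_apply, Matrix.mul_apply]
    have hL2 : ∑ j, ZA i j * P j k = c k * ZB (φ i) k := by
      have hterm : ∀ j : Fin m, ZA i j * P j k
          = (if φ j = k then (1:ℚ) else 0) * ZB (φ i) k := by
        intro j
        rw [hZA i j]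
        by_cases h : φ j = k <;> simp [hP, h]
      rw [Finset.sum_congr rfl (fun j _ => hterm j), ← Finset.sum_mul, hsum_ite k]
    have hR : (P * N') i k = ZB (φ i) k * c k - P i k := by
      have h1e : (1 : Matrix (Fin n) (Fin n) ℚ) (φ i) k = P i k := by
        by_cases h : φ i = k <;> simp [hP, Matrix.one_apply, h]
      rw [hPmul N' i k, hN, Matrix.sub_apply, hD, Matrix.mul_diagonal, h1e]
    rw [hL, hL2, hR, mul_comm]
  have hj : ∀ j : ℕ, M0 ^ j * P = P * N' ^ j := by
    intro j
    induction j with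
    | zero => simp
    | succ j ih =>
      rw [pow_succ, pow_succ, Matrix.mul_assoc, h1, ← Matrix.mul_assoc, ih, Matrix.mul_assoc]
  have hmatS : ∀ j : ℕ, matS (M0 ^ j) = ∑ k, ∑ l, c k * (N' ^ j) k l := by
    intro j
    have e1 : matS (M0 ^ j) = ∑ i, ∑ l, ((M0 ^ j) * P) i l := by
      unfold matS
      refine Finset.sum_congr rfl fun i _ => ?_
      calc ∑ j', (M0 ^ j) i j'
          = ∑ j', (M0 ^ j) i j' * ∑ l, P j' l := by
            simp [hProw]
        _ = ∑ j', ∑ l, (M0 ^ j) i j' * P j' l := by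
            simp [Finset.mul_sum]
        _ = ∑ l, ∑ j', (M0 ^ j) i j' * P j' l := Finset.sum_comm
        _ = ∑ l, ((M0 ^ j) * P) i l := by
            simp [Matrix.mul_apply]
    rw [e1, Finset.sum_congr rfl (fun i _ => Finset.sum_congr rfl (fun l _ => by
      rw [hj j, hPmul]))]
    rw [Finset.sum_comm]
    rw [show (∑ k, ∑ l, c k * (N' ^ j) k l) = ∑ l, ∑ k, c k * (N' ^ j) k l from
      Finset.sum_comm]
    refine Finset.sum_congr rfl fun l _ => ?_
    have hterm : ∀ i : Fin m, (N' ^ j) (φ i) l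
        = ∑ k, (if φ i = k then (1:ℚ) else 0) * (N' ^ j) k l := by
      intro i
      simp [ite_mul, Finset.sum_ite_eq]
    rw [Finset.sum_congr rfl (fun i _ => hterm i), Finset.sum_comm]
    refine Finset.sum_congr rfl fun k _ => ?_
    rw [← Finset.sum_mul, hsum_ite k]
  -- the polynomials
  refine ⟨∑ k, ∑ l, C (c k) * (1 - (X : ℚ[X]) • N'.map C).adjugate k l,
    (1 - (X : ℚ[X]) • N'.map C).det, ?_, ?_, ?_⟩
  -- evaluation facts
  case _ =>
    -- q(-1) ≠ 0
    have hmapEv : (Polynomial.evalRingHom (-1 : ℚ)).mapMatrix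
        (1 - (X : ℚ[X]) • N'.map C) = ZB * D := by
      ext k l
      rw [RingHom.mapMatrix_apply, Matrix.map_apply, Matrix.sub_apply, Matrix.smul_apply,
        Matrix.map_apply, smul_eq_mul]
      simp only [coe_evalRingHom, eval_sub, eval_mul, eval_X, eval_C]
      have : N' k l = (ZB * D) k l - (1 : Matrix (Fin n) (Fin n) ℚ) k l := by
        rw [hN, Matrix.sub_apply]
      rw [this]
      by_cases h : k = l <;> simp [Matrix.one_apply, h]
    have hq : ((1 - (X : ℚ[X]) • N'.map C).det).eval (-1) = (ZB * D).det := by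
      have h := RingHom.map_det (Polynomial.evalRingHom (-1 : ℚ)) (1 - (X : ℚ[X]) • N'.map C)
      rw [hmapEv] at h
      simpa using h
    rw [hq, Matrix.det_mul]
    refine mul_ne_zero hdetZB ?_
    rw [hD, Matrix.det_diagonal]
    exact Finset.prod_ne_zero_iff.mpr fun k _ => hcne k
  case _ =>
    have := genfun N' c
    rw [show (fun k => matS ((ZA - 1) ^ k)) = fun j => ∑ k, ∑ l, c k * (N' ^ j) k l from
      funext fun j => by rw [← hM0, hmatS j]]
    exact this
  case _ =>
    have hmapEv : (Polynomial.evalRingHom (-1 : ℚ)).mapMatrix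
        (1 - (X : ℚ[X]) • N'.map C) = ZB * D := by
      ext k l
      rw [RingHom.mapMatrix_apply, Matrix.map_apply, Matrix.sub_apply, Matrix.smul_apply,
        Matrix.map_apply, smul_eq_mul]
      simp only [coe_evalRingHom, eval_sub, eval_mul, eval_X, eval_C]
      have : N' k l = (ZB * D) k l - (1 : Matrix (Fin n) (Fin n) ℚ) k l := by
        rw [hN, Matrix.sub_apply]
      rw [this]
      by_cases h : k = l <;> simp [Matrix.one_apply, h]
    have hq : ((1 - (X : ℚ[X]) • N'.map C).det).eval (-1) = (ZB * D).det := by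
      have h := RingHom.map_det (Polynomial.evalRingHom (-1 : ℚ)) (1 - (X : ℚ[X]) • N'.map C)
      rw [hmapEv] at h
      simpa using h
    have hdet : (ZB * D).det ≠ 0 := by
      rw [Matrix.det_mul]
      refine mul_ne_zero hdetZB ?_
      rw [hD, Matrix.det_diagonal]
      exact Finset.prod_ne_zero_iff.mpr fun k _ => hcne k
    have hadjEv : ∀ k l, ((1 - (X : ℚ[X]) • N'.map C).adjugate k l).eval (-1)
        = (ZB * D).adjugate k l := by
      intro k l
      have h := RingHom.map_adjugate (Polynomial.evalRingHom (-1 : ℚ))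
        (1 - (X : ℚ[X]) • N'.map C)
      rw [hmapEv] at h
      have h2 := congrFun (congrFun h k) l
      simpa using h2
    have hpe : (∑ k, ∑ l, C (c k) * (1 - (X : ℚ[X]) • N'.map C).adjugate k l).eval (-1)
        = ∑ k, ∑ l, c k * (ZB * D).adjugate k l := by
      rw [Polynomial.eval_finset_sum]
      refine Finset.sum_congr rfl fun k _ => ?_
      rw [Polynomial.eval_finset_sum]
      refine Finset.sum_congr rfl fun l _ => ?_
      rw [eval_mul, eval_C, hadjEv k l]
    rw [hpe, hq]
    -- now pure matrix algebra
    have hadjinv : ∀ k l, (ZB * D).adjugate k l = (ZB * D).det * (ZB * D)⁻¹ k l := by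
      intro k l
      rw [Matrix.inv_def, Matrix.smul_apply, Ring.inverse_eq_inv', smul_eq_mul,
        ← mul_assoc, mul_inv_cancel₀ hdet, one_mul]
    rw [Finset.sum_congr rfl (fun k _ => Finset.sum_congr rfl fun l _ => by
      rw [hadjinv k l, show c k * ((ZB * D).det * (ZB * D)⁻¹ k l)
        = (ZB * D).det * (c k * (ZB * D)⁻¹ k l) from by ring])]
    rw [Finset.sum_congr rfl (fun k _ => (Finset.mul_sum _ _ _).symm), ← Finset.mul_sum]
    rw [mul_comm, mul_div_assoc, div_self hdet, mul_one]
    have hDinv : D⁻¹ = Matrix.diagonal (fun k => (c k)⁻¹) := by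
      have hu : Ring.inverse c = fun k => (c k)⁻¹ := by
        have : c = ((⟨c, fun k => (c k)⁻¹,
            funext fun k => mul_inv_cancel₀ (hcne k),
            funext fun k => inv_mul_cancel₀ (hcne k)⟩ : (Fin n → ℚ)ˣ) : Fin n → ℚ) := rfl
        rw [this, Ring.inverse_unit]
        rfl
      rw [hD, Matrix.inv_diagonal, hu]
    have hMinv : (ZB * D)⁻¹ = D⁻¹ * ZB⁻¹ := Matrix.mul_inv_rev ZB D
    rw [hMinv, hDinv]
    unfold matS
    refine Finset.sum_congr rfl fun k _ => Finset.sum_congr rfl fun l _ => ?_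
    rw [Matrix.diagonal_mul, ← mul_assoc, mul_inv_cancel₀ (hcne k), one_mul]
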